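/- Let p_1,...,p_d ∈ O be pairwise distinct elements (with all differences p_i − p_j, i ≠ j, invertible) and let F = ∏_{i=1}^d (p − p_i) ∈ O[p]. Let (U_k, V_k) be the associated polynomials of order k of F. Then for all 0 ≤ k ≤ d−3 and all 1 ≤ i ≤ d, the evaluation V_k(p_i) equals −(p_i)^k · (∂_x p_i + p_i·∂_y p_i). -/
import Mathlib


open Polynomial

/-- Coefficientwise application of a derivation `δ` of `O` to a polynomial in `O[X]`. -/
noncomputable def cderiv {O : Type*} [CommRing O] (δ : O → O) (f : O[X]) : O[X] :=
  f.sum fun n a => C (δ a) * X ^ n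

/-- The Sylvester matrix of `f` (degree `n`) and `g` (degree `m`); its determinant
is the resultant of `f` and `g`. -/
noncomputable def sylvester {O : Type*} [CommRing O] (f g : O[X]) (n m : ℕ) :
    Matrix (Fin (m + n)) (Fin (m + n)) O :=
  Matrix.of fun i j =>
    if (i : ℕ) < m then
      (if (i : ℕ) ≤ (j : ℕ) ∧ (j : ℕ) ≤ (i : ℕ) + n then f.coeff (n - ((j : ℕ) - (i : ℕ))) else 0)
    else
      (if (i : ℕ) - m ≤ (j : ℕ) ∧ (j : ℕ) ≤ (i : ℕ) - m + m then
        g.coeff (m - ((j : ℕ) - ((i : ℕ) - m))) else 0)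

/-- For `F = ∏ (p − p_i)` with pairwise "distinct" slopes and
`(U_k, V_k)` the associated polynomials of order `k`, for all `0 ≤ k ≤ d − 3` and all `i`
one has `V_k(p_i) = −p_i^k·(∂_x p_i + p_i ∂_y p_i)`. -/

lemma cderiv_eval {O : Type*} [CommRing O] (δ : Derivation ℤ O O) (f : O[X]) (x : O) :
    (cderiv (δ ·) f).eval x = δ (f.eval x) - (derivative f).eval x * δ x := by
  induction f using Polynomial.induction_on' with
  | add f g hf hg =>
      have h : cderiv (δ ·) (f + g) = cderiv (δ ·) f + cderiv (δ ·) g := by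
        unfold cderiv
        rw [Polynomial.sum_add_index] <;> simp [add_mul]
      rw [h]
      simp only [eval_add, map_add, derivative_add, hf, hg]
      ring
  | monomial n a =>
      have h : cderiv (δ ·) (monomial n a) = C (δ a) * X ^ n := by
        unfold cderiv
        rw [Polynomial.sum_monomial_index] <;> simp
      rw [h]
      simp [Polynomial.derivative_monomial, Derivation.leibniz, Derivation.leibniz_pow,
        smul_eq_mul]
      ring

theorem statement3 {O : Type*} [CommRing O] (dx dy : Derivation ℤ O O)
    (d : ℕ) (hd : 3 ≤ d)
    (p : Fin d → O) (hp : ∀ i j, i ≠ j → IsUnit (p i - p j))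
    (F : O[X]) (hF : F = ∏ i, (X - C (p i)))
    (k : ℕ) (hk : k ≤ d - 3)
    (Uk Vk : O[X]) (hUk : Uk.natDegree ≤ d - 2) (hVk : Vk.natDegree ≤ d - 1)
    (hUV : X ^ k * (cderiv (dx ·) F + X * cderiv (dy ·) F) = Uk * F + Vk * derivative F) :
    ∀ i, Vk.eval (p i) = -(p i) ^ k * (dx (p i) + p i * dy (p i)) := by
  intro i
  set PP : O := ∏ l ∈ Finset.univ.erase i, (p i - p l) with hPP
  have hroot : F.eval (p i) = 0 := by
    rw [hF]
    simp [eval_prod]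
    exact Finset.prod_eq_zero (Finset.mem_univ i) (by simp)
  have hsplit : F = (X - C (p i)) * ∏ l ∈ Finset.univ.erase i, (X - C (p l)) := by
    rw [hF, ← Finset.mul_prod_erase Finset.univ (fun l => X - C (p l)) (Finset.mem_univ i)]
  have hder : (derivative F).eval (p i) = PP := by
    rw [hsplit, derivative_mul]
    simp [eval_prod, hPP]
  have hunit : IsUnit PP := by
    rw [hPP]
    refine Finset.prod_induction _ IsUnit (fun a b => IsUnit.mul) isUnit_one ?_
    intro l hl
    exact hp i l fun h => (Finset.mem_erase.mp hl).1 h.symm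
  have heq := congrArg (Polynomial.eval (p i)) hUV
  simp only [eval_mul, eval_add, eval_pow, eval_X, cderiv_eval, hroot, hder, map_zero,
    zero_sub, mul_zero, zero_add] at heq
  have : Vk.eval (p i) * PP = (-(p i) ^ k * (dx (p i) + p i * dy (p i))) * PP := by
    rw [← heq]; ring
  exact hunit.mul_right_cancel this
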